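/- Let ‖·‖ be a complex norm on ℂ^n and let E = { ζ ∈ ℂ^n : ‖ζ‖ ≤ 1 } be its closed unit ball. Then Siciak's homogeneous extremal function of E satisfies Ψ_E(ζ) = ‖ζ‖ for every ζ ∈ ℂ^n. -/

import Mathlib

open scoped ENNReal RealInnerProductSpace BigOperators
open Filter MeasureTheory

noncomputable section

/-- ℂⁿ with the hermitian (euclidean) norm. -/
abbrev Cn (n : ℕ) := EuclideanSpace ℂ (Fin n)
/-- ℝⁿ with the euclidean norm. -/
abbrev Rn (n : ℕ) := EuclideanSpace ℝ (Fin n)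

/-- The inclusion ℝⁿ ⊆ ℂⁿ. -/
def toCn {n : ℕ} (x : Rn n) : Cn n := WithLp.toLp 2 (fun i => (x i : ℂ))

/-- Evaluation of a polynomial on ℂⁿ at a point of ℂⁿ. -/
def evalP {n : ℕ} (p : MvPolynomial (Fin n) ℂ) (ζ : Cn n) : ℂ :=
  MvPolynomial.eval (fun i => ζ i) p

/-- Siciak's homogeneous extremal function with weight `γ`:
`Ψ_{E,γ}(ζ) = sup{ |p(ζ)|^{1/k} : p homogeneous of degree k ≥ 1, |p|^{1/k} ≤ γ on E }`. -/
def siciak {n : ℕ} (E : Set (Cn n)) (γ : Cn n → ℝ) (ζ : Cn n) : ℝ≥0∞ :=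
  ⨆ (p : MvPolynomial (Fin n) ℂ) (k : ℕ) (_ : p.IsHomogeneous k) (_ : 1 ≤ k)
    (_ : ∀ ξ ∈ E, ‖evalP p ξ‖ ^ (1 / (k : ℝ)) ≤ γ ξ),
    ENNReal.ofReal (‖evalP p ζ‖ ^ (1 / (k : ℝ)))

/-- The upper semicontinuous regularization `Ψ^*(ζ) = limsup_{ϑ → ζ} Ψ(ϑ)`. -/
def siciakStar {n : ℕ} (E : Set (Cn n)) (γ : Cn n → ℝ) (ζ : Cn n) : ℝ≥0∞ :=
  Filter.limsup (siciak E γ) (nhds ζ)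

/-- `E` has positive homogeneous capacity in the sense of Siciak:
`Ψ_E^*` is bounded above on the unit sphere of ℂⁿ. -/
def PosHomCapacity {n : ℕ} (E : Set (Cn n)) : Prop :=
  ∃ M : ℝ, ∀ ζ : Cn n, ‖ζ‖ = 1 → siciakStar E (fun _ => 1) ζ ≤ ENNReal.ofReal M

end

noncomputable section

/-- Type synonym for `Cn n` to carry the norm `ν`. -/
def NuAux (n : ℕ) : Type := Cn n

instance {n : ℕ} : AddCommGroup (NuAux n) := inferInstanceAs (AddCommGroup (Cn n))
instance {n : ℕ} : Module ℂ (NuAux n) := inferInstanceAs (Module ℂ (Cn n))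

lemma eval_mul_of_isHomogeneous {n k : ℕ} {p : MvPolynomial (Fin n) ℂ}
    (hp : p.IsHomogeneous k) (c : ℂ) (x : Fin n → ℂ) :
    MvPolynomial.eval (fun i => c * x i) p = c ^ k * MvPolynomial.eval x p := by
  rw [MvPolynomial.eval_eq, MvPolynomial.eval_eq, Finset.mul_sum]
  refine Finset.sum_congr rfl fun d hd => ?_
  have hdk : ∑ i ∈ d.support, d i = k := by
    have h := hp (MvPolynomial.mem_support_iff.mp hd)
    simpa [Finsupp.weight_apply, Finsupp.sum] using h
  simp_rw [mul_pow]
  rw [Finset.prod_mul_distrib, Finset.prod_pow_eq_pow_sum, hdk]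
  ring

lemma exists_nu_functional {n : ℕ} (ν : Cn n → ℝ)
    (hν1 : ∀ (c : ℂ) (z : Cn n), ν (c • z) = ‖c‖ * ν z)
    (hν2 : ∀ z w : Cn n, ν (z + w) ≤ ν z + ν w)
    (hν3 : ∀ z : Cn n, ν z = 0 → z = 0) (ζ : Cn n) (hζ : ζ ≠ 0) :
    ∃ L : Cn n →ₗ[ℂ] ℂ, (∀ z : Cn n, ‖L z‖ ≤ ν z) ∧ L ζ = (ν ζ : ℂ) := by
  have hν0 : ν 0 = 0 := by simpa using hν1 0 0
  letI : NormedAddCommGroup (NuAux n) := AddGroupNorm.toNormedAddCommGroup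
    { toFun := fun z => ν z
      map_zero' := hν0
      add_le' := hν2
      neg' := fun z => by
        have h2 : ∀ w : Cn n, ν (-w) = ν w := fun w => by simpa using hν1 (-1) w
        exact h2 z
      eq_zero_of_map_eq_zero' := fun z h => hν3 z h }
  letI : NormedSpace ℂ (NuAux n) := ⟨fun c x => le_of_eq (by
      show ν (c • x) = ‖c‖ * ν x
      exact hν1 c x)⟩
  obtain ⟨g, hg1, hg2⟩ := exists_dual_vector ℂ (show NuAux n from ζ) (fun h => hζ (hν3 ζ h))
  refine ⟨g.toLinearMap, fun z => ?_, ?_⟩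
  · have h := g.le_opNorm (show NuAux n from z)
    rw [hg1, one_mul] at h
    exact h
  · exact hg2

/-- Proposition 2.4: if `E` is the closed unit ball of a complex norm `ν` on ℂⁿ, then
`Ψ_E(ζ) = ν(ζ)`. -/
theorem siciak_of_complex_unit_ball {n : ℕ} (ν : Cn n → ℝ)
    (hν1 : ∀ (c : ℂ) (z : Cn n), ν (c • z) = ‖c‖ * ν z)
    (hν2 : ∀ z w : Cn n, ν (z + w) ≤ ν z + ν w)
    (hν3 : ∀ z : Cn n, ν z = 0 → z = 0) :
    ∀ ζ : Cn n,
      siciak {z : Cn n | ν z ≤ 1} (fun _ => 1) ζ = ENNReal.ofReal (ν ζ) := by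
  intro ζ
  have hν0 : ν 0 = 0 := by simpa using hν1 0 0
  have hνnn : ∀ z, 0 ≤ ν z := by
    intro z
    have h1 : ν (z + -z) ≤ ν z + ν (-z) := hν2 z (-z)
    have h2 : ν (-z) = ν z := by simpa using hν1 (-1) z
    rw [add_neg_cancel, hν0, h2] at h1
    linarith
  apply le_antisymm
  · -- upper bound : siciak ≤ ν
    refine iSup_le fun p => iSup_le fun k => iSup_le fun hp => iSup_le fun hk =>
      iSup_le fun hb => ?_
    apply ENNReal.ofReal_le_ofReal
    have hk0 : ((k : ℝ)) ≠ 0 := by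
      exact_mod_cast Nat.one_le_iff_ne_zero.mp hk
    by_cases hz : ζ = 0
    · subst hz
      have h0 : evalP (n := n) p 0 = 0 := by
        have h := eval_mul_of_isHomogeneous hp 0 (fun i => (0 : Cn n) i)
        have h1 : (fun i => (0 : ℂ) * (0 : Cn n) i) = fun i => (0 : Cn n) i := by
          funext i; simp
        rw [h1] at h
        unfold evalP
        rw [h, zero_pow (Nat.one_le_iff_ne_zero.mp hk), zero_mul]
      rw [h0, norm_zero, Real.zero_rpow (by simpa using hk0), hν0]
    · have htpos : 0 < ν ζ := lt_of_le_of_ne (hνnn ζ) fun h => hz (hν3 ζ h.symm)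
      set t : ℝ := ν ζ with ht
      set ξ : Cn n := ((t : ℂ))⁻¹ • ζ with hξ
      have hξE : ξ ∈ {z : Cn n | ν z ≤ 1} := by
        show ν ξ ≤ 1
        rw [hξ, hν1]
        simp [norm_inv, Complex.norm_real, Real.norm_eq_abs, abs_of_pos htpos, ← ht,
          inv_mul_cancel₀ htpos.ne']
      have hevalξ : evalP p ξ = ((t : ℂ))⁻¹ ^ k * evalP p ζ := by
        unfold evalP
        have h1 : (fun i => ξ i) = fun i => ((t : ℂ))⁻¹ * ζ i := by
          funext i; simp [hξ]
        rw [h1, eval_mul_of_isHomogeneous hp]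
      have hb' := hb ξ hξE
      rw [hevalξ] at hb'
      have habs : ‖((t : ℂ))⁻¹ ^ k * evalP p ζ‖
          = (t⁻¹) ^ k * ‖evalP p ζ‖ := by
        rw [norm_mul, norm_pow, norm_inv, Complex.norm_real, Real.norm_eq_abs, abs_of_pos htpos]
      rw [habs] at hb'
      set A : ℝ := ‖evalP p ζ‖ with hA
      have hAnn : 0 ≤ A := norm_nonneg _
      have hsplit : ((t⁻¹) ^ k * A) ^ (1 / (k : ℝ))
          = t⁻¹ * A ^ (1 / (k : ℝ)) := by
        rw [Real.mul_rpow (pow_nonneg (inv_nonneg.2 htpos.le) _) hAnn,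
          ← Real.rpow_natCast t⁻¹ k, ← Real.rpow_mul (inv_nonneg.2 htpos.le),
          mul_one_div, div_self hk0, Real.rpow_one]
      rw [hsplit] at hb'
      calc A ^ (1 / (k : ℝ)) = t * (t⁻¹ * A ^ (1 / (k : ℝ))) := by
            field_simp
        _ ≤ t * 1 := by
            exact mul_le_mul_of_nonneg_left hb' htpos.le
        _ = ν ζ := by rw [mul_one]
  · -- lower bound : ν ≤ siciak
    by_cases hz : ζ = 0
    · subst hz
      simp [hν0]
    · obtain ⟨L, hL1, hL2⟩ := exists_nu_functional ν hν1 hν2 hν3 ζ hz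
      set p : MvPolynomial (Fin n) ℂ :=
        ∑ i : Fin n, MvPolynomial.C (L (EuclideanSpace.single i 1)) * MvPolynomial.X i
        with hpdef
      have hhom : p.IsHomogeneous 1 := by
        have hmem : p ∈ MvPolynomial.homogeneousSubmodule (Fin n) ℂ 1 := by
          refine Submodule.sum_mem _ fun i _ => ?_
          rw [MvPolynomial.mem_homogeneousSubmodule]
          simpa using
            (MvPolynomial.isHomogeneous_C (Fin n)
              (L (EuclideanSpace.single i 1))).mul (MvPolynomial.isHomogeneous_X ℂ i)
        exact (MvPolynomial.mem_homogeneousSubmodule _ _).1 hmem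
      have heval : ∀ z : Cn n, evalP p z = L z := by
        intro z
        have hrepr : z = ∑ i, z i • EuclideanSpace.single i (1 : ℂ) := by
          have h := (EuclideanSpace.basisFun (Fin n) ℂ).sum_repr z
          simp only [EuclideanSpace.basisFun_repr, EuclideanSpace.basisFun_apply] at h
          exact h.symm
        conv_rhs => rw [hrepr, map_sum]
        unfold evalP
        rw [hpdef, map_sum]
        refine Finset.sum_congr rfl fun i _ => ?_
        rw [map_mul, MvPolynomial.eval_C, MvPolynomial.eval_X, LinearMap.map_smul,
          smul_eq_mul, mul_comm]
      have hbound : ∀ ξ ∈ {z : Cn n | ν z ≤ 1},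
          ‖evalP p ξ‖ ^ (1 / ((1 : ℕ) : ℝ)) ≤ (fun _ : Cn n => (1:ℝ)) ξ := by
        intro ξ hξ
        simp only [Nat.cast_one, one_div, inv_one, Real.rpow_one, heval]
        exact (hL1 ξ).trans hξ
      have hval : ‖evalP p ζ‖ ^ (1 / ((1 : ℕ) : ℝ)) = ν ζ := by
        rw [heval, hL2]
        simp [abs_of_nonneg (hνnn ζ)]
      calc ENNReal.ofReal (ν ζ)
          = ENNReal.ofReal (‖evalP p ζ‖ ^ (1 / ((1 : ℕ) : ℝ))) := by rw [hval]
        _ ≤ _ := by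
            refine le_iSup_of_le p (le_iSup_of_le 1 (le_iSup_of_le hhom
              (le_iSup_of_le le_rfl (le_iSup_of_le hbound le_rfl))))

end
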